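/- arXiv:1301.7050 — 2 statements merged into one kernel-verified Lean document; each statement's English description precedes it below -/
import Mathlib

section
/- A right R-module N is M-𝒜-flat if and only if its character module N⁺ is an M-𝒜-injective left R-module. -/
open TensorProduct MulOpposite CategoryTheory

universe u

section NC

variable (R : Type u) [Ring R]

/-- The defining relations of the tensor product `N ⊗[R] X` of a right `R`-module `N`
and a left `R`-module `X` over a (possibly noncommutative) ring `R`, inside `N ⊗[ℤ] X`. -/
def ncRel (N : Type u) [AddCommGroup N] [Module Rᵐᵒᵖ N]
    (X : Type u) [AddCommGroup X] [Module R X] : Submodule ℤ (N ⊗[ℤ] X) :=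
  Submodule.span ℤ {z | ∃ (r : R) (n : N) (x : X), z = (op r • n) ⊗ₜ[ℤ] x - n ⊗ₜ[ℤ] (r • x)}

/-- The tensor product `N ⊗[R] X` of a right `R`-module `N` and a left `R`-module `X`
over a (possibly noncommutative) ring `R`. -/
abbrev NCTensor (N : Type u) [AddCommGroup N] [Module Rᵐᵒᵖ N]
    (X : Type u) [AddCommGroup X] [Module R X] : Type u :=
  (N ⊗[ℤ] X) ⧸ ncRel R N X

/-- Functoriality of the tensor product in the left (right-module) variable. -/
noncomputable def ncMapL {N N' : Type u} [AddCommGroup N] [Module Rᵐᵒᵖ N]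
    [AddCommGroup N'] [Module Rᵐᵒᵖ N'] (g : N →ₗ[Rᵐᵒᵖ] N')
    (X : Type u) [AddCommGroup X] [Module R X] :
    NCTensor R N X →ₗ[ℤ] NCTensor R N' X :=
  Submodule.mapQ (ncRel R N X) (ncRel R N' X) (LinearMap.rTensor X g.toAddMonoidHom.toIntLinearMap) (by
    rw [ncRel, Submodule.span_le]
    rintro _ ⟨r, n, x, rfl⟩
    show LinearMap.rTensor X g.toAddMonoidHom.toIntLinearMap ((op r • n) ⊗ₜ[ℤ] x - n ⊗ₜ[ℤ] (r • x)) ∈ ncRel R N' X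
    simp only [map_sub, LinearMap.rTensor_tmul]
    have h : g.toAddMonoidHom.toIntLinearMap (op r • n) =
        op r • g.toAddMonoidHom.toIntLinearMap n := by
      simp [map_smul]
    rw [h]
    exact Submodule.subset_span ⟨r, g n, x, rfl⟩)

/-- Functoriality of the tensor product in the right (left-module) variable. -/
noncomputable def ncMap (N : Type u) [AddCommGroup N] [Module Rᵐᵒᵖ N]
    {X Y : Type u} [AddCommGroup X] [Module R X] [AddCommGroup Y] [Module R Y]
    (f : X →ₗ[R] Y) : NCTensor R N X →ₗ[ℤ] NCTensor R N Y :=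
  Submodule.mapQ (ncRel R N X) (ncRel R N Y) (LinearMap.lTensor N f.toAddMonoidHom.toIntLinearMap) (by
    rw [ncRel, Submodule.span_le]
    rintro _ ⟨r, n, x, rfl⟩
    show LinearMap.lTensor N f.toAddMonoidHom.toIntLinearMap ((op r • n) ⊗ₜ[ℤ] x - n ⊗ₜ[ℤ] (r • x)) ∈ ncRel R N Y
    simp only [map_sub, LinearMap.lTensor_tmul]
    have h : f.toAddMonoidHom.toIntLinearMap (r • x) =
        r • f.toAddMonoidHom.toIntLinearMap x := by
      simp [map_smul]
    rw [h]
    exact Submodule.subset_span ⟨r, n, f x, rfl⟩)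

lemma ncMap_mk (N : Type u) [AddCommGroup N] [Module Rᵐᵒᵖ N]
    {X Y : Type u} [AddCommGroup X] [Module R X] [AddCommGroup Y] [Module R Y]
    (f : X →ₗ[R] Y) (w : N ⊗[ℤ] X) :
    ncMap R N f (Submodule.Quotient.mk w) =
      Submodule.Quotient.mk (LinearMap.lTensor N f.toAddMonoidHom.toIntLinearMap w) := by
  unfold ncMap
  exact Submodule.mapQ_apply (p := ncRel R N X) (q := ncRel R N Y) (LinearMap.lTensor N f.toAddMonoidHom.toIntLinearMap) w

section lemmas

variable {R}
variable {X Y Z : Type u} [AddCommGroup X] [Module R X] [AddCommGroup Y] [Module R Y]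
  [AddCommGroup Z] [Module R Z]

lemma toInt_id : ((LinearMap.id : X →ₗ[R] X).toAddMonoidHom).toIntLinearMap =
    (LinearMap.id : X →ₗ[ℤ] X) := rfl

lemma toInt_comp (f : X →ₗ[R] Y) (g : Y →ₗ[R] Z) :
    ((g ∘ₗ f).toAddMonoidHom).toIntLinearMap =
      g.toAddMonoidHom.toIntLinearMap ∘ₗ f.toAddMonoidHom.toIntLinearMap := rfl

lemma toInt_add (f g : X →ₗ[R] Y) :
    ((f + g).toAddMonoidHom).toIntLinearMap =
      f.toAddMonoidHom.toIntLinearMap + g.toAddMonoidHom.toIntLinearMap := rfl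

end lemmas

/-- The functor `N ⊗[R] - : R-Mod ⥤ Ab` for a right `R`-module `N`. -/
noncomputable def ncTensorFunctor (N : Type u) [AddCommGroup N] [Module Rᵐᵒᵖ N] :
    ModuleCat.{u} R ⥤ ModuleCat.{u} ℤ where
  obj X := ModuleCat.of ℤ (NCTensor R N X)
  map {X Y} f := ModuleCat.ofHom (ncMap R N f.hom)
  map_id X := by
    refine ModuleCat.hom_ext (LinearMap.ext fun z => ?_)
    obtain ⟨w, rfl⟩ := Submodule.Quotient.mk_surjective _ z
    show ncMap R N (LinearMap.id : X →ₗ[R] X) _ = _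
    rw [ncMap_mk, toInt_id, LinearMap.lTensor_id]
    rfl
  map_comp {X Y Z} f g := by
    refine ModuleCat.hom_ext (LinearMap.ext fun z => ?_)
    obtain ⟨w, rfl⟩ := Submodule.Quotient.mk_surjective _ z
    show ncMap R N (g.hom ∘ₗ f.hom) (Submodule.Quotient.mk w) = ncMap R N g.hom (ncMap R N f.hom (Submodule.Quotient.mk w))
    rw [ncMap_mk, ncMap_mk, ncMap_mk, toInt_comp, LinearMap.lTensor_comp]
    rfl

instance ncTensorFunctor_additive (N : Type u) [AddCommGroup N] [Module Rᵐᵒᵖ N] :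
    (ncTensorFunctor R N).Additive where
  map_add {X Y f g} := by
    refine ModuleCat.hom_ext (LinearMap.ext fun z => ?_)
    obtain ⟨w, rfl⟩ := Submodule.Quotient.mk_surjective _ z
    show ncMap R N (f.hom + g.hom) (Submodule.Quotient.mk w) = ncMap R N f.hom (Submodule.Quotient.mk w) + ncMap R N g.hom (Submodule.Quotient.mk w)
    rw [ncMap_mk, ncMap_mk, ncMap_mk, toInt_add, LinearMap.lTensor_add]
    rfl

/-- `Tor₁^R(N, Z)` for a right `R`-module `N` and a left `R`-module `Z`, defined as the value at
`Z` of the first left derived functor of the functor `N ⊗[R] -`. -/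
noncomputable def ncTor1 (N : Type u) [AddCommGroup N] [Module Rᵐᵒᵖ N]
    (Z : Type u) [AddCommGroup Z] [Module R Z] : ModuleCat.{u} ℤ :=
  (((ncTensorFunctor R N).leftDerived 1).obj (ModuleCat.of R Z))

/-- `Tor₁^R(N, Z) = 0`. -/
def Tor1IsZero (N : Type u) [AddCommGroup N] [Module Rᵐᵒᵖ N]
    (Z : Type u) [AddCommGroup Z] [Module R Z] : Prop :=
  Limits.IsZero (ncTor1 R N Z)

/-- `Ext¹_R(Z, T) = 0`, where `Ext` is the derived functor of `Hom` on the category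
of left `R`-modules. -/
def Ext1IsZero (Z T : Type u) [AddCommGroup Z] [Module R Z] [AddCommGroup T] [Module R T] :
    Prop :=
  Limits.IsZero ((((Ext ℤ (ModuleCat.{u} R) 1).obj (Opposite.op (ModuleCat.of R Z))).obj
    (ModuleCat.of R T)))

end NC

open MulOpposite


section Char

variable (R : Type u) [Ring R]

/-- The right `R`-module structure on the character module `A⁺ = Hom_ℤ(A, ℚ/ℤ)` of a left
`R`-module `A`, given by `(c • r) (a) = c (r • a)`. -/
instance charModuleRight (A : Type u) [AddCommGroup A] [Module R A] :
    Module Rᵐᵒᵖ (CharacterModule A) where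
  smul r c := (c.comp (DistribMulAction.toAddMonoidHom A r.unop) : A →+ _)
  one_smul c := DFunLike.ext _ _ fun a => congrArg c (one_smul R a)
  mul_smul r s c := DFunLike.ext _ _ fun a => congrArg c (mul_smul s.unop r.unop a)
  smul_zero r := rfl
  smul_add r c c' := rfl
  add_smul r s c := DFunLike.ext _ _ fun a => by
    show c ((r.unop + s.unop) • a) = c (r.unop • a) + c (s.unop • a)
    rw [add_smul, map_add]
  zero_smul c := DFunLike.ext _ _ fun a => by
    show c ((0 : R) • a) = 0
    rw [zero_smul, map_zero]

/-- The left `R`-module structure on the character module `N⁺ = Hom_ℤ(N, ℚ/ℤ)` of a right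
`R`-module `N`, given by `(r • c) (n) = c (n • r)`. -/
instance charModuleLeft (N : Type u) [AddCommGroup N] [Module Rᵐᵒᵖ N] :
    Module R (CharacterModule N) where
  smul r c := (c.comp (DistribMulAction.toAddMonoidHom N (op r)) : N →+ _)
  one_smul c := DFunLike.ext _ _ fun n => congrArg c (one_smul Rᵐᵒᵖ n)
  mul_smul r s c := DFunLike.ext _ _ fun n => congrArg c (mul_smul (op s) (op r) n)
  smul_zero r := rfl
  smul_add r c c' := rfl
  add_smul r s c := DFunLike.ext _ _ fun n => by
    show c ((op r + op s) • n) = c (op r • n) + c (op s • n)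
    rw [add_smul, map_add]
  zero_smul c := DFunLike.ext _ _ fun n => by
    show c ((0 : Rᵐᵒᵖ) • n) = 0
    rw [zero_smul, map_zero]

end Char

section Classes

variable (R : Type u) [Ring R] (M : Type u) [AddCommGroup M] [Module R M]

/-- `T` is `M`-`𝒜`-injective if, for every `A ∈ 𝒜`, every homomorphism `A → T` extends to `M`,
i.e. the restriction map `Hom(M, T) → Hom(A, T)` is surjective. -/
def MAInjective (𝒜 : Set (Submodule R M)) (T : Type u) [AddCommGroup T] [Module R T] : Prop :=
  ∀ A ∈ 𝒜, ∀ f : (↥A) →ₗ[R] T, ∃ g : M →ₗ[R] T, g ∘ₗ A.subtype = f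

/-- `T` is strongly `M`-`𝒜`-injective if `Ext¹_R(M/A, T) = 0` for all `A ∈ 𝒜`. -/
def SMAInjective (𝒜 : Set (Submodule R M)) (T : Type u) [AddCommGroup T] [Module R T] : Prop :=
  ∀ A ∈ 𝒜, Ext1IsZero R (M ⧸ A) T

/-- A right `R`-module `N` is `M`-`𝒜`-flat if `N ⊗ A → N ⊗ M` is injective for all `A ∈ 𝒜`. -/
def MAFlat (𝒜 : Set (Submodule R M)) (N : Type u) [AddCommGroup N] [Module Rᵐᵒᵖ N] : Prop :=
  ∀ A ∈ 𝒜, Function.Injective (ncMap R N A.subtype)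

/-- A right `R`-module `N` is strongly `M`-`𝒜`-flat if `Tor₁^R(N, M/A) = 0` for all `A ∈ 𝒜`. -/
def SMAFlat (𝒜 : Set (Submodule R M)) (N : Type u) [AddCommGroup N] [Module Rᵐᵒᵖ N] : Prop :=
  ∀ A ∈ 𝒜, Tor1IsZero R N (M ⧸ A)

end Classes

section Flat

variable (R : Type u) [Ring R]

/-- A left `R`-module `Z` is flat if tensoring with it preserves injectivity of morphisms of
right `R`-modules. -/
def FlatLeftModule (Z : Type u) [AddCommGroup Z] [Module R Z] : Prop :=
  ∀ (N N' : Type u) [AddCommGroup N] [Module Rᵐᵒᵖ N] [AddCommGroup N'] [Module Rᵐᵒᵖ N']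
    (g : N' →ₗ[Rᵐᵒᵖ] N), Function.Injective g → Function.Injective (ncMapL R g Z)

end Flat

section Aux

variable {R : Type u} [Ring R] {N : Type u} [AddCommGroup N] [Module Rᵐᵒᵖ N]

/-- Extensionality for characters on `NCTensor`. -/
lemma ncChar_ext {X : Type u} [AddCommGroup X] [Module R X]
    {c c' : CharacterModule (NCTensor R N X)}
    (h : ∀ (n : N) (x : X),
      c (Submodule.Quotient.mk (n ⊗ₜ[ℤ] x)) = c' (Submodule.Quotient.mk (n ⊗ₜ[ℤ] x))) :
    c = c' := by
  ext z
  obtain ⟨w, rfl⟩ := Submodule.Quotient.mk_surjective _ z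
  induction w using TensorProduct.induction_on with
  | zero => simp only [Submodule.Quotient.mk_zero, map_zero]
  | tmul n x => exact h n x
  | add a b ha hb =>
      rw [Submodule.Quotient.mk_add, map_add, map_add, ha, hb]

/-- From an `R`-linear map `X → N⁺` to a character of `NCTensor R N X`. -/
noncomputable def toChar {X : Type u} [AddCommGroup X] [Module R X]
    (φ : X →ₗ[R] CharacterModule N) : CharacterModule (NCTensor R N X) :=
  (Submodule.liftQ (ncRel R N X)
    ((TensorProduct.liftAddHom (R := ℤ)
      { toFun := fun n =>
          { toFun := fun x => φ x n
            map_zero' := by show φ (0 : X) n = 0; rw [map_zero]; rfl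
            map_add' := fun x y => by
              show φ (x + y) n = φ x n + φ y n
              rw [map_add]; rfl }
        map_zero' := by ext x; exact (φ x).map_zero
        map_add' := fun n m => by ext x; exact (φ x).map_add n m }
      (fun z n x => by
        show φ x (z • n) = φ (z • x) n
        have h1 : φ (z • x) = z • φ x := map_zsmul φ z x
        rw [h1]
        exact ((φ x).map_zsmul z n).trans rfl)).toIntLinearMap)
    (by
      rw [ncRel, Submodule.span_le]
      rintro _ ⟨r, n, x, rfl⟩
      simp only [SetLike.mem_coe, LinearMap.mem_ker, AddMonoidHom.coe_toIntLinearMap, map_sub,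
        TensorProduct.liftAddHom_tmul]
      show φ x (op r • n) - φ (r • x) n = 0
      rw [φ.map_smul]
      exact sub_self _)).toAddMonoidHom

@[simp] lemma toChar_mk {X : Type u} [AddCommGroup X] [Module R X]
    (φ : X →ₗ[R] CharacterModule N) (n : N) (x : X) :
    toChar φ (Submodule.Quotient.mk (n ⊗ₜ[ℤ] x)) = φ x n := rfl

/-- From a character of `NCTensor R N X` to an `R`-linear map `X → N⁺`. -/
noncomputable def fromChar {X : Type u} [AddCommGroup X] [Module R X]
    (c : CharacterModule (NCTensor R N X)) : X →ₗ[R] CharacterModule N where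
  toFun x :=
    { toFun := fun n => c (Submodule.Quotient.mk (n ⊗ₜ[ℤ] x))
      map_zero' := by
        show c (Submodule.Quotient.mk ((0 : N) ⊗ₜ[ℤ] x)) = 0
        rw [TensorProduct.zero_tmul, Submodule.Quotient.mk_zero, map_zero]
      map_add' := fun n m => by
        show c (Submodule.Quotient.mk ((n + m) ⊗ₜ[ℤ] x)) = _
        rw [TensorProduct.add_tmul, Submodule.Quotient.mk_add, map_add] }
  map_add' x y := by
    ext n
    show c (Submodule.Quotient.mk (n ⊗ₜ[ℤ] (x + y))) = _
    rw [TensorProduct.tmul_add, Submodule.Quotient.mk_add, map_add]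
    rfl
  map_smul' r x := by
    ext n
    show c (Submodule.Quotient.mk (n ⊗ₜ[ℤ] (r • x)))
      = c (Submodule.Quotient.mk ((op r • n) ⊗ₜ[ℤ] x))
    congr 1
    exact ((Submodule.Quotient.eq (ncRel R N X)).mpr
      (Submodule.subset_span ⟨r, n, x, rfl⟩)).symm

lemma fromChar_toChar {X : Type u} [AddCommGroup X] [Module R X]
    (φ : X →ₗ[R] CharacterModule N) : fromChar (toChar φ) = φ := by
  refine LinearMap.ext fun x => ?_
  ext n
  rfl

lemma toChar_fromChar {X : Type u} [AddCommGroup X] [Module R X]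
    (c : CharacterModule (NCTensor R N X)) : toChar (fromChar c) = c :=
  ncChar_ext fun _ _ => rfl

lemma toChar_injective {X : Type u} [AddCommGroup X] [Module R X] :
    Function.Injective (toChar (R := R) (N := N) (X := X)) :=
  Function.LeftInverse.injective fromChar_toChar

/-- Naturality of `toChar` with respect to the inclusion of a submodule. -/
lemma dual_ncMap_toChar {M : Type u} [AddCommGroup M] [Module R M] (A : Submodule R M)
    (g : M →ₗ[R] CharacterModule N) :
    CharacterModule.dual (ncMap R N A.subtype) (toChar g) = toChar (g ∘ₗ A.subtype) := by
  refine ncChar_ext fun n a => ?_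
  show toChar g (ncMap R N A.subtype (Submodule.Quotient.mk (n ⊗ₜ[ℤ] a))) = _
  rw [ncMap_mk]
  simp only [LinearMap.lTensor_tmul]
  rfl

end Aux

/-- A right `R`-module `N` is `M`-`𝒜`-flat if and only if its character module
`N⁺ = Hom_ℤ(N, ℚ/ℤ)` is an `M`-`𝒜`-injective left `R`-module. -/
theorem stmt3 (R : Type u) [Ring R] (M : Type u) [AddCommGroup M] [Module R M]
    (𝒜 : Set (Submodule R M)) (N : Type u) [AddCommGroup N] [Module Rᵐᵒᵖ N] :
    MAFlat R M 𝒜 N ↔ MAInjective R M 𝒜 (CharacterModule N) := by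
  constructor
  · intro hflat A hA f
    obtain ⟨χ, hχ⟩ := CharacterModule.dual_surjective_of_injective
      (ncMap R N A.subtype) (hflat A hA) (toChar f)
    refine ⟨fromChar χ, toChar_injective ?_⟩
    rw [← dual_ncMap_toChar, toChar_fromChar, hχ]
  · intro hinj A hA
    rw [injective_iff_map_eq_zero]
    intro z hz
    refine CharacterModule.eq_zero_of_character_apply fun χ => ?_
    obtain ⟨g, hg⟩ := hinj A hA (fromChar χ)
    have : χ = CharacterModule.dual (ncMap R N A.subtype) (toChar g) := by
      rw [dual_ncMap_toChar, hg, toChar_fromChar]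
    rw [this]
    show toChar g (ncMap R N A.subtype z) = 0
    rw [hz, map_zero]
end

section
/- Let R be a commutative ring and S a simple R-module. Then Tor₁^R(S, M/A) = 0 for every A ∈ 𝒜 if and only if Ext¹_R(M/A, S) = 0 for every A ∈ 𝒜; that is, S is strongly M-𝒜-flat if and only if S is strongly M-𝒜-injective. -/
open CategoryTheory
open TensorProduct

universe u

section Core

/-- Core linear algebra over a field: exactness at the middle of a three-term
sequence is equivalent to "exactness" of the dualized sequence. -/
lemma core_iff {k : Type u} [Field k] {V₂ V₁ V₀ : Type u}
    [AddCommGroup V₂] [AddCommGroup V₁] [AddCommGroup V₀]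
    [Module k V₂] [Module k V₁] [Module k V₀]
    (D₂ : V₂ →ₗ[k] V₁) (D₁ : V₁ →ₗ[k] V₀) :
    (∀ x : V₁, D₁ x = 0 → ∃ y, D₂ y = x) ↔
      (∀ F : V₁ →ₗ[k] k, F ∘ₗ D₂ = 0 → ∃ G : V₀ →ₗ[k] k, G ∘ₗ D₁ = F) := by
  constructor
  · intro hA F hF
    have hker : LinearMap.ker D₁ ≤ LinearMap.ker F := by
      intro x hx
      obtain ⟨y, rfl⟩ := hA x hx
      simpa using LinearMap.congr_fun hF y
    set e := D₁.quotKerEquivRange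
    set Fbar : (V₁ ⧸ LinearMap.ker D₁) →ₗ[k] k := (LinearMap.ker D₁).liftQ F hker
    obtain ⟨G, hG⟩ := LinearMap.exists_extend (Fbar ∘ₗ e.symm.toLinearMap)
    refine ⟨G, ?_⟩
    ext x
    have h1 : G (D₁ x) =
        (Fbar ∘ₗ e.symm.toLinearMap) ⟨D₁ x, LinearMap.mem_range_self _ x⟩ := by
      rw [← hG]; rfl
    have h2 : e.symm ⟨D₁ x, LinearMap.mem_range_self _ x⟩ =
        Submodule.Quotient.mk x := by
      rw [LinearEquiv.symm_apply_eq]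
      rfl
    simp only [LinearMap.comp_apply, LinearMap.coe_comp, Function.comp_apply] at h1 ⊢
    rw [h1]
    simp only [LinearEquiv.coe_coe, h2, Fbar, Submodule.liftQ_apply]
  · intro hB x hx
    by_contra hxr
    push_neg at hxr
    have hxmem : x ∉ LinearMap.range D₂ := by
      rintro ⟨y, rfl⟩
      exact hxr y rfl
    set q := (LinearMap.range D₂).mkQ
    have hq : q x ≠ 0 := by
      simpa [q, Submodule.Quotient.mk_eq_zero] using hxmem
    have : ¬ (∀ φ : Module.Dual k (V₁ ⧸ LinearMap.range D₂), φ (q x) = 0) := by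
      rw [Module.forall_dual_apply_eq_zero_iff]
      exact hq
    push_neg at this
    obtain ⟨φ, hφ⟩ := this
    have hF : (φ ∘ₗ q) ∘ₗ D₂ = 0 := by
      ext y
      have : q (D₂ y) = 0 := by
        simp [q, Submodule.Quotient.mk_eq_zero]
      simp [this]
    obtain ⟨G, hG⟩ := hB (φ ∘ₗ q) hF
    have := LinearMap.congr_fun hG x
    simp only [LinearMap.comp_apply] at this
    rw [hx, map_zero] at this
    exact hφ this.symm

end Core

section Bridge

variable {R : Type u} [CommRing R] (m : Ideal R) [m.IsMaximal]
variable {P₂ P₁ P₀ : Type u}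
  [AddCommGroup P₂] [AddCommGroup P₁] [AddCommGroup P₀]
  [Module R P₂] [Module R P₁] [Module R P₀]

set_option maxHeartbeats 2000000 in
/-- The bridge: exactness of `k ⊗ P₂ → k ⊗ P₁ → k ⊗ P₀` at the middle is equivalent to
"co-exactness" of `Hom(P₀,k) → Hom(P₁,k) → Hom(P₂,k)` at the middle, where `k = R⧸m`. -/
lemma bridge_iff (d₂ : P₂ →ₗ[R] P₁) (d₁ : P₁ →ₗ[R] P₀) :
    (∀ x : (R ⧸ m) ⊗[R] P₁, d₁.lTensor (R ⧸ m) x = 0 →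
        ∃ y : (R ⧸ m) ⊗[R] P₂, d₂.lTensor (R ⧸ m) y = x) ↔
      (∀ f : P₁ →ₗ[R] R ⧸ m, f ∘ₗ d₂ = 0 → ∃ g : P₀ →ₗ[R] R ⧸ m, g ∘ₗ d₁ = f) := by
  letI : Field (R ⧸ m) := Ideal.Quotient.field m
  set D₂ : (R ⧸ m) ⊗[R] P₂ →ₗ[(R ⧸ m)] (R ⧸ m) ⊗[R] P₁ := d₂.baseChange (R ⧸ m) with hD₂
  set D₁ : (R ⧸ m) ⊗[R] P₁ →ₗ[(R ⧸ m)] (R ⧸ m) ⊗[R] P₀ := d₁.baseChange (R ⧸ m) with hD₁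
  have hbc₂ : ∀ x, D₂ x = d₂.lTensor (R ⧸ m) x := fun x =>
    congrFun (d₂.baseChange_eq_ltensor (A := (R ⧸ m))) x
  have hbc₁ : ∀ x, D₁ x = d₁.lTensor (R ⧸ m) x := fun x =>
    congrFun (d₁.baseChange_eq_ltensor (A := (R ⧸ m))) x
  rw [show (∀ x : (R ⧸ m) ⊗[R] P₁, d₁.lTensor (R ⧸ m) x = 0 →
        ∃ y : (R ⧸ m) ⊗[R] P₂, d₂.lTensor (R ⧸ m) y = x) ↔
      (∀ x : (R ⧸ m) ⊗[R] P₁, D₁ x = 0 → ∃ y, D₂ y = x) by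
    simp only [hbc₁, hbc₂]]
  rw [core_iff D₂ D₁]
  constructor
  · intro hB f hf
    set F : (R ⧸ m) ⊗[R] P₁ →ₗ[(R ⧸ m)] (R ⧸ m) := f.liftBaseChange (R ⧸ m) with hF
    have hFD : F ∘ₗ D₂ = 0 := by
      refine LinearMap.ext fun z => ?_
      simp only [LinearMap.comp_apply, LinearMap.zero_apply]
      induction z using TensorProduct.induction_on with
      | zero => simp
      | tmul c p =>
          rw [hD₂, LinearMap.baseChange_tmul, hF, LinearMap.liftBaseChange_tmul]
          have : f (d₂ p) = 0 := LinearMap.congr_fun hf p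
          rw [this, smul_zero]
      | add a b ha hb => simp [map_add, ha, hb]
    obtain ⟨G, hG⟩ := hB F hFD
    refine ⟨(G.restrictScalars R) ∘ₗ
      ((TensorProduct.mk R (R ⧸ m) P₀) 1), ?_⟩
    ext p
    have h1 : D₁ ((1 : (R ⧸ m)) ⊗ₜ[R] p) = (1 : (R ⧸ m)) ⊗ₜ[R] d₁ p := by
      rw [hD₁, LinearMap.baseChange_tmul]
    have h2 := LinearMap.congr_fun hG ((1 : (R ⧸ m)) ⊗ₜ[R] p)
    simp only [LinearMap.comp_apply] at h2 ⊢
    rw [TensorProduct.mk_apply, LinearMap.coe_restrictScalars, ← h1, h2, hF,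
      LinearMap.liftBaseChange_tmul, one_smul]
  · intro hb F hFD
    set f : P₁ →ₗ[R] (R ⧸ m) := (F.restrictScalars R) ∘ₗ ((TensorProduct.mk R (R ⧸ m) P₁) 1) with hf
    have hfd : f ∘ₗ d₂ = 0 := by
      ext p
      have h1 : D₂ ((1 : (R ⧸ m)) ⊗ₜ[R] p) = (1 : (R ⧸ m)) ⊗ₜ[R] d₂ p := by
        rw [hD₂, LinearMap.baseChange_tmul]
      have h2 := LinearMap.congr_fun hFD ((1 : (R ⧸ m)) ⊗ₜ[R] p)
      simp only [LinearMap.comp_apply, LinearMap.zero_apply] at h2 ⊢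
      rw [hf]
      simp only [LinearMap.comp_apply, TensorProduct.mk_apply,
        LinearMap.coe_restrictScalars]
      rw [← h1, h2]
    obtain ⟨g, hg⟩ := hb f hfd
    refine ⟨g.liftBaseChange (R ⧸ m), ?_⟩
    refine LinearMap.ext fun z => ?_
    simp only [LinearMap.comp_apply]
    induction z using TensorProduct.induction_on with
    | zero => simp
    | tmul c p =>
        have h4 : (c • ((1 : (R ⧸ m)) ⊗ₜ[R] p) : (R ⧸ m) ⊗[R] P₁) = c ⊗ₜ[R] p := by
          rw [TensorProduct.smul_tmul', smul_eq_mul, mul_one]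
        rw [hD₁, LinearMap.baseChange_tmul, LinearMap.liftBaseChange_tmul, ← h4,
          LinearMap.map_smul]
        have h3 : g (d₁ p) = f p := LinearMap.congr_fun hg p
        rw [h3, hf]
        simp only [LinearMap.comp_apply, TensorProduct.mk_apply,
          LinearMap.coe_restrictScalars]
    | add a b ha hb' => rw [map_add, map_add, map_add, ha, hb']

end Bridge

section Main

variable {R : Type u} [CommRing R]

open ZeroObject Limits in
/-- For `k = R⧸m` with `m` maximal, `Tor₁(k, N) = 0 ↔ Ext¹(N, k) = 0`. -/
lemma tor_iff_ext (m : Ideal R) [m.IsMaximal] (N : ModuleCat.{u} R) :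
    Limits.IsZero (((Tor (ModuleCat.{u} R) 1).obj
        (ModuleCat.of R (R ⧸ m))).obj N) ↔
      Limits.IsZero (((Ext R (ModuleCat.{u} R) 1).obj
        (Opposite.op N)).obj (ModuleCat.of R (R ⧸ m))) := by
  obtain ⟨P⟩ : Nonempty (ProjectiveResolution N) := HasProjectiveResolution.out
  set k := ModuleCat.of R (R ⧸ m)
  -- Tor side
  set F := (MonoidalCategory.tensoringLeft (ModuleCat.{u} R)).obj k with hFdef
  set K := (F.mapHomologicalComplex (ComplexShape.down ℕ)).obj P.complex with hK
  have eTor : ((Tor (ModuleCat.{u} R) 1).obj k).obj N ≅ K.homology 1 :=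
    P.isoLeftDerivedObj F 1
  have hTor : Limits.IsZero (((Tor (ModuleCat.{u} R) 1).obj k).obj N) ↔ K.ExactAt 1 := by
    rw [HomologicalComplex.exactAt_iff_isZero_homology]
    exact ⟨fun h => h.of_iso eTor.symm, fun h => h.of_iso eTor⟩
  -- Ext side
  set L := P.complex.linearYonedaObj R k with hL
  have eExt : ((Ext R (ModuleCat.{u} R) 1).obj (Opposite.op N)).obj k ≅ L.homology 1 :=
    P.isoExt 1 k
  have hExt : Limits.IsZero (((Ext R (ModuleCat.{u} R) 1).obj (Opposite.op N)).obj k) ↔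
      L.ExactAt 1 := by
    rw [HomologicalComplex.exactAt_iff_isZero_homology]
    exact ⟨fun h => h.of_iso eExt.symm, fun h => h.of_iso eExt⟩
  rw [hTor, hExt]
  rw [K.exactAt_iff' 2 1 0 (by simp) (by simp),
    L.exactAt_iff' 0 1 2 (by simp) (by simp),
    ShortComplex.moduleCat_exact_iff, ShortComplex.moduleCat_exact_iff]
  have hb := bridge_iff m (P.complex.d 2 1).hom (P.complex.d 1 0).hom
  constructor
  · intro h f hf
    obtain ⟨g, hg⟩ := hb.mp (fun x hx => h x hx) f.hom (congrArg ModuleCat.Hom.hom hf)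
    exact ⟨ModuleCat.ofHom g, ModuleCat.hom_ext hg⟩
  · intro h x hx
    exact hb.mpr (fun f hf => by
      obtain ⟨g, hg⟩ := h (ModuleCat.ofHom f) (ModuleCat.hom_ext hf)
      exact ⟨g.hom, congrArg ModuleCat.Hom.hom hg⟩) x hx

end Main

/-- Let `R` be a commutative ring and `S` a simple `R`-module. Then `Tor₁^R(S, M/A) = 0` for
every `A ∈ 𝒜` if and only if `Ext¹_R(M/A, S) = 0` for every `A ∈ 𝒜`; that is, `S` is strongly
`M`-`𝒜`-flat if and only if `S` is strongly `M`-`𝒜`-injective. -/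
theorem stmt8 (R : Type u) [CommRing R] (M : Type u) [AddCommGroup M] [Module R M]
    (𝒜 : Set (Submodule R M)) (S : Type u) [AddCommGroup S] [Module R S]
    [IsSimpleModule R S] :
    (∀ A ∈ 𝒜, Limits.IsZero (((Tor (ModuleCat.{u} R) 1).obj
        (ModuleCat.of R S)).obj (ModuleCat.of R (M ⧸ A)))) ↔
      (∀ A ∈ 𝒜, Limits.IsZero (((Ext R (ModuleCat.{u} R) 1).obj
        (Opposite.op (ModuleCat.of R (M ⧸ A)))).obj (ModuleCat.of R S))) := by
  obtain ⟨mI, hmax, ⟨e⟩⟩ := isSimpleModule_iff_quot_maximal.mp ‹IsSimpleModule R S›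
  haveI := hmax
  set i : ModuleCat.of R S ≅ ModuleCat.of R (R ⧸ mI) := e.toModuleIso
  constructor <;> intro h A hA
  · have h1 := h A hA
    have h2 : Limits.IsZero (((Tor (ModuleCat.{u} R) 1).obj
        (ModuleCat.of R (R ⧸ mI))).obj (ModuleCat.of R (M ⧸ A))) :=
      h1.of_iso (((Tor (ModuleCat.{u} R) 1).mapIso i).app (ModuleCat.of R (M ⧸ A))).symm
    have h3 := (tor_iff_ext mI (ModuleCat.of R (M ⧸ A))).mp h2
    exact h3.of_iso ((((Ext R (ModuleCat.{u} R) 1).obj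
      (Opposite.op (ModuleCat.of R (M ⧸ A)))).mapIso i))
  · have h1 := h A hA
    have h2 : Limits.IsZero (((Ext R (ModuleCat.{u} R) 1).obj
        (Opposite.op (ModuleCat.of R (M ⧸ A)))).obj (ModuleCat.of R (R ⧸ mI))) :=
      h1.of_iso ((((Ext R (ModuleCat.{u} R) 1).obj
        (Opposite.op (ModuleCat.of R (M ⧸ A)))).mapIso i)).symm
    have h3 := (tor_iff_ext mI (ModuleCat.of R (M ⧸ A))).mpr h2
    exact h3.of_iso (((Tor (ModuleCat.{u} R) 1).mapIso i).app (ModuleCat.of R (M ⧸ A)))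
end
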